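/- For a hereditarily unicoherent continuum X, the following are equivalent: (1) X has exactly one meager composant; (2) every two points of X lie in a common nowhere dense subcontinuum; (3) every subcontinuum of X that is irreducible between two of its points is nowhere dense in X. -/
import Mathlib


open Set Topology

/-- The meager composant of `x`: the union of all nowhere dense subcontinua containing `x`. -/
def MeagerComposant (X : Type) [TopologicalSpace X] (x : X) : Set X :=
  ⋃₀ {L : Set X | IsCompact L ∧ IsConnected L ∧ IsNowhereDense L ∧ x ∈ L}

/-- A continuum is hereditarily unicoherent if the intersection of any two subcontinua
is connected (possibly empty, hence preconnected). -/
def HereditarilyUnicoherent (X : Type) [TopologicalSpace X] : Prop :=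
  ∀ A B : Set X, IsCompact A → IsConnected A → IsCompact B → IsConnected B →
    IsPreconnected (A ∩ B)

/-- A subcontinuum `A` of `X` is ample if every open neighborhood of `A` contains a
subcontinuum having `A` in its interior. -/
def Ample {X : Type} [TopologicalSpace X] (A : Set X) : Prop :=
  ∀ U : Set X, IsOpen U → A ⊆ U →
    ∃ K : Set X, IsCompact K ∧ IsPreconnected K ∧ A ⊆ interior K ∧ K ⊆ U

/-- A set `C` is indecomposable if it is not the union of two proper subcontinua. -/
def IndecomposableSet {X : Type} [TopologicalSpace X] (C : Set X) : Prop :=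
  ¬ ∃ H K : Set X, IsCompact H ∧ IsConnected H ∧ IsCompact K ∧ IsConnected K ∧
    H ⊆ C ∧ K ⊆ C ∧ H ≠ C ∧ K ≠ C ∧ H ∪ K = C

lemma nwd_mono {X : Type*} [TopologicalSpace X] {s t : Set X} (h : s ⊆ t)
    (ht : IsNowhereDense t) : IsNowhereDense s := by
  have : interior (closure s) ⊆ interior (closure t) :=
    interior_mono (closure_mono h)
  rw [IsNowhereDense] at ht ⊢
  exact subset_empty_iff.mp (ht ▸ this)

lemma nwd_union {X : Type*} [TopologicalSpace X] {s t : Set X} (hs : IsClosed s)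
    (ht : IsClosed t) (hns : IsNowhereDense s) (hnt : IsNowhereDense t) :
    IsNowhereDense (s ∪ t) := by
  rw [(hs.union ht).isNowhereDense_iff]
  rw [hs.isNowhereDense_iff] at hns
  rw [ht.isNowhereDense_iff] at hnt
  by_contra hne
  obtain ⟨z, hz⟩ := nonempty_iff_ne_empty.mpr hne
  by_cases hcase : (interior (s ∪ t) \ s).Nonempty
  · obtain ⟨w, hw⟩ := hcase
    have hopen : IsOpen (interior (s ∪ t) \ s) := isOpen_interior.sdiff hs
    have hsub : interior (s ∪ t) \ s ⊆ t := fun a ha =>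
      (interior_subset ha.1).resolve_left ha.2
    have : interior (s ∪ t) \ s ⊆ interior t := hopen.subset_interior_iff.mpr hsub
    rw [hnt] at this
    exact this hw
  · rw [not_nonempty_iff_eq_empty, diff_eq_empty] at hcase
    have : interior (s ∪ t) ⊆ interior s := isOpen_interior.subset_interior_iff.mpr hcase
    rw [hns] at this
    exact this hz

lemma chain_sInter_connected {X : Type*} [TopologicalSpace X] [T2Space X]
    (c : Set (Set X)) (hc : IsChain (· ⊆ ·) c) (hne : c.Nonempty)
    (hcpt : ∀ K ∈ c, IsCompact K) (hconn : ∀ K ∈ c, IsConnected K) :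
    IsCompact (⋂₀ c) ∧ IsConnected (⋂₀ c) := by
  have hcl : ∀ K ∈ c, IsClosed K := fun K hK => (hcpt K hK).isClosed
  have hclI : IsClosed (⋂₀ c) := isClosed_sInter hcl
  obtain ⟨K₀, hK₀⟩ := hne
  have hcompact : IsCompact (⋂₀ c) :=
    (hcpt K₀ hK₀).of_isClosed_subset hclI (sInter_subset_of_mem hK₀)
  have : Nonempty c := Nonempty.to_subtype ⟨K₀, hK₀⟩
  have hdir : DirectedOn (· ⊇ ·) c := by
    intro a ha b hb
    rcases hc.total ha hb with h | h
    · exact ⟨a, ha, Subset.rfl, h⟩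
    · exact ⟨b, hb, h, Subset.rfl⟩
  have hnonempty : (⋂₀ c).Nonempty :=
    IsCompact.nonempty_sInter_of_directed_nonempty_isCompact_isClosed hdir
      (fun K hK => (hconn K hK).nonempty) hcpt hcl
  refine ⟨hcompact, hnonempty, ?_⟩
  rw [isPreconnected_iff_subset_of_fully_disjoint_closed hclI]
  intro u v hu hv hsub hdisj
  have hA : IsCompact (⋂₀ c ∩ u) := hcompact.inter_right hu
  have hB : IsCompact (⋂₀ c ∩ v) := hcompact.inter_right hv
  have hdAB : Disjoint (⋂₀ c ∩ u) (⋂₀ c ∩ v) :=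
    (hdisj.mono inter_subset_right inter_subset_right)
  obtain ⟨U, V, hUo, hVo, hAU, hBV, hUV⟩ :=
    SeparatedNhds.of_isCompact_isCompact hA hB hdAB
  -- some K in c is contained in U ∪ V
  have hex : ∃ K ∈ c, K ⊆ U ∪ V := by
    by_contra hcon
    push_neg at hcon
    set F : Set (Set X) := (fun K => K \ (U ∪ V)) '' c with hF
    have hFne : Nonempty F := Nonempty.to_subtype ⟨_, mem_image_of_mem _ hK₀⟩
    have hFdir : DirectedOn (· ⊇ ·) F := by
      rintro _ ⟨K₁, hK₁, rfl⟩ _ ⟨K₂, hK₂, rfl⟩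
      obtain ⟨K₃, hK₃, h31, h32⟩ := hdir K₁ hK₁ K₂ hK₂
      exact ⟨_, mem_image_of_mem _ hK₃, diff_subset_diff_left h31,
        diff_subset_diff_left h32⟩
    have hFn : ∀ S ∈ F, S.Nonempty := by
      rintro _ ⟨K, hK, rfl⟩
      exact nonempty_iff_ne_empty.mpr fun he => hcon K hK (diff_eq_empty.mp he)
    have hFc : ∀ S ∈ F, IsCompact S := by
      rintro _ ⟨K, hK, rfl⟩
      exact (hcpt K hK).diff (hUo.union hVo)
    have hFcl : ∀ S ∈ F, IsClosed S := by
      rintro _ ⟨K, hK, rfl⟩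
      exact (hcl K hK).sdiff (hUo.union hVo)
    obtain ⟨z, hz⟩ :=
      IsCompact.nonempty_sInter_of_directed_nonempty_isCompact_isClosed hFdir hFn hFc hFcl
    have hz1 : z ∈ ⋂₀ c := fun K hK => (hz _ (mem_image_of_mem _ hK)).1
    have hz2 : z ∉ U ∪ V := (hz _ (mem_image_of_mem _ hK₀)).2
    rcases hsub hz1 with h | h
    · exact hz2 (Or.inl (hAU ⟨hz1, h⟩))
    · exact hz2 (Or.inr (hBV ⟨hz1, h⟩))
  obtain ⟨K, hK, hKsub⟩ := hex
  rcases (hconn K hK).isPreconnected.subset_or_subset hUo hVo hUV hKsub with h | h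
  · left
    intro z hz
    rcases hsub hz with h1 | h1
    · exact h1
    · exact absurd (hBV ⟨hz, h1⟩) (fun hzV => hUV.ne_of_mem (h (sInter_subset_of_mem hK hz)) hzV rfl)
  · right
    intro z hz
    rcases hsub hz with h1 | h1
    · exact absurd (hAU ⟨hz, h1⟩) (fun hzU => hUV.ne_of_mem hzU (h (sInter_subset_of_mem hK hz)) rfl)
    · exact h1


/-- For a (nondegenerate) hereditarily unicoherent continuum the following are
equivalent: (1) there is only one meager composant; (2) every two points lie in a common
nowhere dense subcontinuum; (3) every subcontinuum irreducible between two of its points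
is nowhere dense. -/
theorem one_meagerComposant_tfae (X : Type) [MetricSpace X] [CompactSpace X] [ConnectedSpace X] [Nonempty X] [Nontrivial X]
    (hX : HereditarilyUnicoherent X) :
    ((∀ x y : X, MeagerComposant X x = MeagerComposant X y) ↔
      (∀ x y : X, ∃ L : Set X, IsCompact L ∧ IsConnected L ∧ IsNowhereDense L ∧
        x ∈ L ∧ y ∈ L)) ∧
    ((∀ x y : X, ∃ L : Set X, IsCompact L ∧ IsConnected L ∧ IsNowhereDense L ∧
        x ∈ L ∧ y ∈ L) ↔
      (∀ K : Set X, IsCompact K → IsConnected K →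
        (∃ a ∈ K, ∃ b ∈ K, ∀ L : Set X, L ⊆ K → IsCompact L → IsConnected L →
          a ∈ L → b ∈ L → L = K) → IsNowhereDense K)) := by
  -- singletons are nowhere dense
  have hsing : ∀ y : X, IsNowhereDense ({y} : Set X) := by
    intro y
    rw [(isClosed_singleton (x := y)).isNowhereDense_iff]
    by_contra hne
    obtain ⟨z, hz⟩ := nonempty_iff_ne_empty.mpr hne
    have hzy : z ∈ ({y} : Set X) := interior_subset hz
    rw [mem_singleton_iff] at hzy
    subst hzy
    have hio : interior ({z} : Set X) = {z} :=
      Subset.antisymm interior_subset (singleton_subset_iff.mpr hz)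
    have hclopen : IsClopen ({z} : Set X) := ⟨isClosed_singleton, hio ▸ isOpen_interior⟩
    rcases isClopen_iff.mp hclopen with h | h
    · exact absurd h (singleton_ne_empty z)
    · obtain ⟨w, hw⟩ := exists_ne z
      exact hw (by have : w ∈ ({z} : Set X) := h ▸ mem_univ w; exact this)
  constructor
  · constructor
    · intro h x y
      have hy : y ∈ MeagerComposant X y :=
        ⟨{y}, ⟨isCompact_singleton, isConnected_singleton, hsing y, rfl⟩, rfl⟩
      rw [← h x y] at hy
      obtain ⟨L, ⟨hLc, hLconn, hLnwd, hxL⟩, hyL⟩ := hy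
      exact ⟨L, hLc, hLconn, hLnwd, hxL, hyL⟩
    · intro h x y
      -- show any two meager composants coincide
      have key : ∀ a b : X, MeagerComposant X a ⊆ MeagerComposant X b := by
        intro a b z hz
        obtain ⟨L', ⟨hL'c, hL'conn, hL'nwd, haL'⟩, hzL'⟩ := hz
        obtain ⟨L, hLc, hLconn, hLnwd, haL, hbL⟩ := h a b
        refine ⟨L ∪ L', ⟨hLc.union hL'c, hLconn.union ⟨a, haL, haL'⟩ hL'conn, ?_, Or.inl hbL⟩,
          Or.inr hzL'⟩
        exact nwd_union hLc.isClosed hL'c.isClosed hLnwd hL'nwd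
      exact Subset.antisymm (key x y) (key y x)
  · constructor
    · intro h K hKc hKconn ⟨a, ha, b, hb, hirr⟩
      obtain ⟨L, hLc, hLconn, hLnwd, haL, hbL⟩ := h a b
      have hKL : IsConnected (K ∩ L) :=
        ⟨⟨a, ha, haL⟩, hX K L hKc hKconn hLc hLconn⟩
      have heq : K ∩ L = K :=
        hirr (K ∩ L) inter_subset_left (hKc.inter_right hLc.isClosed) hKL ⟨ha, haL⟩ ⟨hb, hbL⟩
      have : K ⊆ L := by rw [← heq]; exact inter_subset_right
      exact nwd_mono this hLnwd
    · intro h x y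
      -- Zorn: find a minimal continuum containing x and y
      set S : Set (Set X) := {K | IsCompact K ∧ IsConnected K ∧ x ∈ K ∧ y ∈ K} with hS
      have huniv : (univ : Set X) ∈ S :=
        ⟨isCompact_univ, isConnected_univ, mem_univ x, mem_univ y⟩
      obtain ⟨m, -, hmS, hmmin⟩ := zorn_superset_nonempty S (fun c hcS hc hne => by
        obtain ⟨hcpt, hconn⟩ := chain_sInter_connected c hc hne
          (fun K hK => (hcS hK).1) (fun K hK => (hcS hK).2.1)
        exact ⟨⋂₀ c, ⟨hcpt, hconn, fun K hK => (hcS hK).2.2.1, fun K hK => (hcS hK).2.2.2⟩,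
          fun s hs => sInter_subset_of_mem hs⟩) univ huniv
      obtain ⟨hmc, hmconn, hxm, hym⟩ := hmS
      have hnwd : IsNowhereDense m := by
        refine h m hmc hmconn ⟨x, hxm, y, hym, fun L hLm hLc hLconn hxL hyL => ?_⟩
        exact Subset.antisymm hLm (hmmin ⟨hLc, hLconn, hxL, hyL⟩ hLm)
      exact ⟨m, hmc, hmconn, hnwd, hxm, hym⟩
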